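/- arXiv:1904.09109 — 4 statements merged into one kernel-verified Lean document; each statement's English description precedes it below -/
import Mathlib

section
/- Let a ∈ ℝ^d with ‖a‖₂ = 1, let δ > 0, let b_1 < ⋯ < b_{k+1} be reals, let v_1, …, v_k ∈ ℝ^m, and let W ∈ ℝ^{k×m} have first row v_1ᵀ and i-th row (v_i - v_{i-1})ᵀ for 2 ≤ i ≤ k, with columns w_1, …, w_m ∈ ℝ^k. For c_s > 0 define the network g : ℝ^d → ℝ^m by g_j(x) = Σ_{l=1}^{k} W_{l,j} · ρ(c_s(aᵀx - b_l)). Then for every x ∈ ℝ^d with b_i + δ < aᵀx < b_{i+1} - δ for some i ∈ {1,…,k}, and every j ∈ {1,…,m}, one has |g_j(x) - (v_i)_j| ≤ ‖w_j‖₂ · √k · e^{-c_s δ}. -/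
open RealInnerProductSpace

/-- The sigmoid function `ρ(t) = 1 / (1 + e^{-t})`. -/
noncomputable def sigmoid (t : ℝ) : ℝ := 1 / (1 + Real.exp (-t))

lemma sigmoid_nonneg (t : ℝ) : 0 ≤ sigmoid t := by
  unfold sigmoid; positivity

lemma sigmoid_le_exp (t : ℝ) : sigmoid t ≤ Real.exp t := by
  unfold sigmoid
  rw [div_le_iff₀ (by positivity)]
  have key : Real.exp t * Real.exp (-t) = 1 := by
    rw [← Real.exp_add]; simp
  nlinarith [Real.exp_pos t]

lemma one_sub_sigmoid_le (t : ℝ) : 1 - sigmoid t ≤ Real.exp (-t) := by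
  unfold sigmoid
  have h : (0:ℝ) < 1 + Real.exp (-t) := by positivity
  have e : 1 - 1 / (1 + Real.exp (-t)) = Real.exp (-t) / (1 + Real.exp (-t)) := by
    field_simp
    ring
  rw [e, div_le_iff₀ h]
  nlinarith [Real.exp_pos (-t)]

lemma sigmoid_le_one (t : ℝ) : sigmoid t ≤ 1 := by
  unfold sigmoid
  rw [div_le_one (by positivity)]
  linarith [Real.exp_pos (-t)]

/-- For the 2-layer sigmoid network with difference-weight matrix `W`, if `x` projects
into the `i`-th interval with `δ`-margin, then each output coordinate deviates from
the target `v_i` by at most `‖w_j‖₂ √k e^{-c_s δ}`, where `w_j` is the `j`-th column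
of `W`. -/
theorem network_output_deviation_bound {d k m : ℕ} (hk : 0 < k)
    (a : EuclideanSpace ℝ (Fin d)) (ha : ‖a‖ = 1)
    (δ : ℝ) (hδ : 0 < δ)
    (b : Fin (k + 1) → ℝ) (hb : StrictMono b)
    (v : Fin k → Fin m → ℝ)
    (W : Matrix (Fin k) (Fin m) ℝ)
    (hW0 : W ⟨0, hk⟩ = v ⟨0, hk⟩)
    (hWs : ∀ i j : Fin k, (j : ℕ) = (i : ℕ) + 1 → W j = v j - v i)
    (cs : ℝ) (hcs : 0 < cs)
    (g : EuclideanSpace ℝ (Fin d) → Fin m → ℝ)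
    (hg : ∀ x j, g x j = ∑ l : Fin k, W l j * sigmoid (cs * (⟪a, x⟫ - b l.castSucc)))
    (x : EuclideanSpace ℝ (Fin d)) (i : Fin k)
    (hx₁ : b i.castSucc + δ < ⟪a, x⟫)
    (hx₂ : ⟪a, x⟫ < b i.succ - δ) :
    ∀ j : Fin m,
      |g x j - v i j| ≤
        Real.sqrt (∑ l : Fin k, (W l j) ^ 2) * Real.sqrt k * Real.exp (-(cs * δ)) := by
  intro j
  set t := ⟪a, x⟫ with ht
  set E := Real.exp (-(cs * δ)) with hE
  have hE0 : 0 ≤ E := Real.exp_nonneg _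
  have hbound : ∀ l : Fin k,
      |sigmoid (cs * (t - b l.castSucc)) - (if l ≤ i then (1:ℝ) else 0)| ≤ E := by
    intro l
    by_cases hl : l ≤ i
    · rw [if_pos hl]
      have hble : b l.castSucc ≤ b i.castSucc :=
        hb.monotone (Fin.castSucc_le_castSucc_iff.mpr hl)
      have hs : cs * δ ≤ cs * (t - b l.castSucc) :=
        mul_le_mul_of_nonneg_left (by linarith) hcs.le
      rw [abs_sub_comm, abs_of_nonneg (by linarith [sigmoid_le_one (cs * (t - b l.castSucc))])]
      calc 1 - sigmoid (cs * (t - b l.castSucc))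
          ≤ Real.exp (-(cs * (t - b l.castSucc))) := one_sub_sigmoid_le _
        _ ≤ E := Real.exp_le_exp.mpr (by linarith)
    · rw [if_neg hl]
      push_neg at hl
      have hble : b i.succ ≤ b l.castSucc := by
        apply hb.monotone
        have := Fin.lt_def.mp hl
        simp only [Fin.le_def, Fin.val_succ, Fin.coe_castSucc]
        omega
      have hs : cs * (t - b l.castSucc) ≤ -(cs * δ) := by nlinarith
      rw [sub_zero, abs_of_nonneg (sigmoid_nonneg _)]
      calc sigmoid (cs * (t - b l.castSucc))
          ≤ Real.exp (cs * (t - b l.castSucc)) := sigmoid_le_exp _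
        _ ≤ E := Real.exp_le_exp.mpr hs
  have tel : ∀ n (hn : n < k),
      ∑ l ∈ Finset.univ.filter (fun l : Fin k => l ≤ ⟨n, hn⟩), W l j = v ⟨n, hn⟩ j := by
    intro n
    induction n with
    | zero =>
      intro hn
      have hf : Finset.univ.filter (fun l : Fin k => l ≤ ⟨0, hn⟩) = {(⟨0, hn⟩ : Fin k)} := by
        ext l
        simp only [Finset.mem_filter, Finset.mem_univ, true_and, Finset.mem_singleton,
          Fin.le_def, Fin.ext_iff]
        omega
      rw [hf, Finset.sum_singleton]
      exact congrFun hW0 j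
    | succ n ih =>
      intro hn
      have hn' : n < k := Nat.lt_of_succ_lt hn
      have hfil : Finset.univ.filter (fun l : Fin k => l ≤ ⟨n + 1, hn⟩)
          = insert (⟨n + 1, hn⟩ : Fin k)
              (Finset.univ.filter (fun l : Fin k => l ≤ ⟨n, hn'⟩)) := by
        ext l
        simp only [Finset.mem_filter, Finset.mem_univ, true_and, Finset.mem_insert,
          Fin.le_def, Fin.ext_iff]
        omega
      rw [hfil, Finset.sum_insert (by simp [Fin.le_def]), ih hn',
        congrFun (hWs ⟨n, hn'⟩ ⟨n + 1, hn⟩ rfl) j]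
      simp [Pi.sub_apply]
  have hvi : ∑ l : Fin k, W l j * (if l ≤ i then (1:ℝ) else 0) = v i j := by
    have := tel i.val i.isLt
    simp only [Fin.eta] at this
    rw [← this, Finset.sum_filter]
    congr 1; ext l
    by_cases hl : l ≤ i <;> simp [hl]
  have hdiff : g x j - v i j =
      ∑ l : Fin k, W l j * (sigmoid (cs * (t - b l.castSucc)) - (if l ≤ i then (1:ℝ) else 0)) := by
    rw [hg, ← hvi, ← Finset.sum_sub_distrib]
    congr 1; ext l; ring
  have h1 : |g x j - v i j| ≤ (∑ l : Fin k, |W l j|) * E := by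
    rw [hdiff, Finset.sum_mul]
    calc |∑ l : Fin k, W l j * (sigmoid (cs * (t - b l.castSucc)) - (if l ≤ i then (1:ℝ) else 0))|
        ≤ ∑ l : Fin k, |W l j * (sigmoid (cs * (t - b l.castSucc)) - (if l ≤ i then (1:ℝ) else 0))| :=
          Finset.abs_sum_le_sum_abs _ _
      _ ≤ ∑ l : Fin k, |W l j| * E := by
          refine Finset.sum_le_sum fun l _ => ?_
          rw [abs_mul]
          exact mul_le_mul_of_nonneg_left (hbound l) (abs_nonneg _)
  have h2 : ∑ l : Fin k, |W l j| ≤ Real.sqrt (∑ l : Fin k, (W l j) ^ 2) * Real.sqrt k := by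
    have hc := sq_sum_le_card_mul_sum_sq (s := (Finset.univ : Finset (Fin k)))
      (f := fun l : Fin k => |W l j|)
    simp only [sq_abs, Finset.card_univ, Fintype.card_fin] at hc
    have h3 := Real.sqrt_le_sqrt hc
    rw [Real.sqrt_sq (Finset.sum_nonneg fun l _ => abs_nonneg _)] at h3
    rw [Real.sqrt_mul (by positivity)] at h3
    linarith [h3, mul_comm (Real.sqrt (k : ℝ)) (Real.sqrt (∑ l : Fin k, (W l j) ^ 2))]
  calc |g x j - v i j| ≤ (∑ l : Fin k, |W l j|) * E := h1
    _ ≤ Real.sqrt (∑ l : Fin k, (W l j) ^ 2) * Real.sqrt k * E :=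
        mul_le_mul_of_nonneg_right h2 hE0
end

section
/- Let a ∈ ℝ^d with ‖a‖₂ = 1, let δ > 0, let b_1 < ⋯ < b_{k+1} be reals, let v_1, …, v_k ∈ ℝ^m, and let W ∈ ℝ^{k×m} have first row v_1ᵀ and i-th row (v_i - v_{i-1})ᵀ for 2 ≤ i ≤ k. For c > 0 define g_c : ℝ^d → ℝ^m by (g_c)_j(x) = Σ_{l=1}^{k} W_{l,j} · ρ(c(aᵀx - b_l)). Then for every x ∈ ℝ^d with b_i + δ < aᵀx < b_{i+1} - δ for some i ∈ {1,…,k}, the output g_c(x) converges to v_i as c → ∞. -/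
open RealInnerProductSpace

lemma sigmoid_tendsto_one {s : ℝ} (hs : 0 < s) :
    Filter.Tendsto (fun c : ℝ => sigmoid (c * s)) Filter.atTop (nhds 1) := by
  have h1 : Filter.Tendsto (fun c : ℝ => c * s) Filter.atTop Filter.atTop :=
    Filter.Tendsto.atTop_mul_const hs Filter.tendsto_id
  have h2 : Filter.Tendsto (fun c : ℝ => Real.exp (-(c * s))) Filter.atTop (nhds 0) :=
    Real.tendsto_exp_neg_atTop_nhds_zero.comp h1
  have h3 : Filter.Tendsto (fun c : ℝ => 1 / (1 + Real.exp (-(c * s))))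
      Filter.atTop (nhds (1 / (1 + 0))) :=
    Filter.Tendsto.div tendsto_const_nhds (tendsto_const_nhds.add h2) (by norm_num)
  norm_num at h3
  simpa [sigmoid] using h3

lemma sigmoid_tendsto_zero {s : ℝ} (hs : s < 0) :
    Filter.Tendsto (fun c : ℝ => sigmoid (c * s)) Filter.atTop (nhds 0) := by
  have h1 : Filter.Tendsto (fun c : ℝ => -(c * s)) Filter.atTop Filter.atTop := by
    have : Filter.Tendsto (fun c : ℝ => c * (-s)) Filter.atTop Filter.atTop :=
      Filter.Tendsto.atTop_mul_const (by linarith) Filter.tendsto_id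
    simpa [mul_neg] using this
  have h2 : Filter.Tendsto (fun c : ℝ => Real.exp (-(c * s))) Filter.atTop Filter.atTop :=
    Real.tendsto_exp_atTop.comp h1
  have h3 : Filter.Tendsto (fun c : ℝ => 1 + Real.exp (-(c * s))) Filter.atTop Filter.atTop :=
    Filter.tendsto_atTop_add_const_left _ 1 h2
  have h4 := Filter.Tendsto.comp tendsto_inv_atTop_zero h3
  have : Filter.Tendsto (fun c : ℝ => (1 + Real.exp (-(c * s)))⁻¹) Filter.atTop (nhds 0) := h4
  simpa [sigmoid, one_div] using this

lemma telescope {k m : ℕ} (hk : 0 < k) (v : Fin k → Fin m → ℝ)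
    (W : Matrix (Fin k) (Fin m) ℝ)
    (hW0 : W ⟨0, hk⟩ = v ⟨0, hk⟩)
    (hWs : ∀ i j : Fin k, (j : ℕ) = (i : ℕ) + 1 → W j = v j - v i) :
    ∀ i : Fin k, ∑ l ∈ Finset.Iic i, W l = v i := by
  obtain ⟨k, rfl⟩ : ∃ k', k = k' + 1 := ⟨k - 1, (Nat.succ_pred_eq_of_pos hk).symm⟩
  intro i
  induction i using Fin.induction with
  | zero =>
    have : Finset.Iic (0 : Fin (k + 1)) = {0} := by
      ext y; simp only [Finset.mem_Iic, Finset.mem_singleton, Fin.le_def, Fin.ext_iff, Fin.val_zero, Nat.le_zero]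
    rw [this, Finset.sum_singleton (fun l => (W l : Fin m → ℝ)) (0 : Fin (k + 1))]
    simpa using hW0
  | succ j ih =>
    have hstep : W j.succ = v j.succ - v j.castSucc := by
      apply hWs j.castSucc j.succ; simp
    have hsplit : Finset.Iic j.succ = insert j.succ (Finset.Iic j.castSucc) := by
      ext y
      simp only [Finset.mem_Iic, Finset.mem_insert, Fin.le_def, Fin.ext_iff,
        Fin.val_succ, Fin.coe_castSucc]
      omega
    rw [hsplit, Finset.sum_insert (f := fun l => (W l : Fin m → ℝ)) (by simp [Fin.lt_def]), ih, hstep]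
    abel

/-- For the 2-layer sigmoid network with difference-weight matrix `W`, if `x` projects
into the `i`-th interval with `δ`-margin, then the network output `g_c(x)` converges
to the target `v_i` as the scaling factor `c → ∞`. -/
theorem network_output_tendsto {d k m : ℕ} (hk : 0 < k)
    (a : EuclideanSpace ℝ (Fin d)) (ha : ‖a‖ = 1)
    (δ : ℝ) (hδ : 0 < δ)
    (b : Fin (k + 1) → ℝ) (hb : StrictMono b)
    (v : Fin k → Fin m → ℝ)
    (W : Matrix (Fin k) (Fin m) ℝ)
    (hW0 : W ⟨0, hk⟩ = v ⟨0, hk⟩)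
    (hWs : ∀ i j : Fin k, (j : ℕ) = (i : ℕ) + 1 → W j = v j - v i)
    (x : EuclideanSpace ℝ (Fin d)) (i : Fin k)
    (hx₁ : b i.castSucc + δ < ⟪a, x⟫)
    (hx₂ : ⟪a, x⟫ < b i.succ - δ) :
    Filter.Tendsto
      (fun c : ℝ => fun j : Fin m =>
        ∑ l : Fin k, W l j * sigmoid (c * (⟪a, x⟫ - b l.castSucc)))
      Filter.atTop (nhds (v i)) := by
  rw [tendsto_pi_nhds]
  intro j
  set t := ⟪a, x⟫ with ht
  have key : ∀ l : Fin k, Filter.Tendsto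
      (fun c : ℝ => W l j * sigmoid (c * (t - b l.castSucc))) Filter.atTop
      (nhds (W l j * (if l ≤ i then 1 else 0))) := by
    intro l
    by_cases hl : l ≤ i
    · have hpos : 0 < t - b l.castSucc := by
        have : b l.castSucc ≤ b i.castSucc :=
          hb.monotone (Fin.castSucc_le_castSucc_iff.mpr hl)
        linarith
      simpa [hl] using (tendsto_const_nhds.mul (sigmoid_tendsto_one hpos))
    · have hlt : i < l := lt_of_not_ge hl
      have hneg : t - b l.castSucc < 0 := by
        have : b i.succ ≤ b l.castSucc := hb.monotone (by
          simp only [Fin.le_def, Fin.val_succ, Fin.coe_castSucc]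
          exact hlt)
        linarith
      simpa [hl] using (tendsto_const_nhds.mul (sigmoid_tendsto_zero hneg))
  have hsum := tendsto_finset_sum Finset.univ (fun l _ => key l)
  have hval : ∑ l : Fin k, W l j * (if l ≤ i then 1 else 0) = v i j := by
    have h1 : ∑ l : Fin k, W l j * (if l ≤ i then 1 else 0)
        = ∑ l ∈ Finset.Iic i, W l j := by
      simp only [mul_ite, mul_one, mul_zero, ← Finset.sum_filter]
      congr 1
      ext y; simp
    have h2 := congrFun (telescope hk v W hW0 hWs i) j
    rw [h1]
    rw [← h2]
    exact (Finset.sum_apply (g := fun l => (W l : Fin m → ℝ)) j _).symm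
  exact hval ▸ hsum
end

section
/- (Corollary 1) Let D be a probability distribution on ℝ^d × {1,…,c} that is k-separable with δ-margin, witnessed by a unit vector a ∈ ℝ^d, boundaries b_1 < ⋯ < b_{k+1}, and labels y_1, …, y_k ∈ {1,…,c}. Then there exist a scaling factor c_s > 0 and a weight matrix W ∈ ℝ^{k×c} such that the 2-layer sigmoid network g : ℝ^d → ℝ^c given by g_j(x) = Σ_{l=1}^{k} W_{l,j} · ρ(c_s(aᵀx - b_l)) perfectly classifies D: for D-almost every (x,y), the label y is the unique index maximizing the vector g(x), i.e., g_y(x) > g_j(x) for all j ≠ y. -/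
open RealInnerProductSpace MeasureTheory

lemma sigmoid_pos (t : ℝ) : 0 < sigmoid t := by
  unfold sigmoid
  positivity

lemma sigmoid_lt_one (t : ℝ) : sigmoid t < 1 := by
  unfold sigmoid
  rw [div_lt_one (by positivity)]
  have := Real.exp_pos (-t)
  linarith

lemma sigmoid_lt_exp (t : ℝ) : sigmoid t < Real.exp t := by
  unfold sigmoid
  rw [div_lt_iff₀ (by positivity)]
  have h1 := Real.exp_pos t
  have h2 : Real.exp t * Real.exp (-t) = 1 := by
    rw [← Real.exp_add]; simp
  nlinarith

lemma one_sub_exp_lt_sigmoid (t : ℝ) : 1 - Real.exp (-t) < sigmoid t := by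
  unfold sigmoid
  rw [lt_div_iff₀ (by positivity)]
  have h1 := Real.exp_pos (-t)
  nlinarith

/-- Key pointwise separation lemma. -/
lemma key_lt {k c : ℕ} {δ cs : ℝ} (hδ : 0 < δ) (hcs : 0 < cs)
    (hε : (2:ℝ) ^ (k + 1) * Real.exp (-(cs * δ)) < 1)
    (b : Fin (k + 1) → ℝ) (hb : StrictMono b) (y : Fin k → Fin c)
    (x : ℝ) (i : Fin k) (hx1 : b i.castSucc + δ < x) (hx2 : x < b i.succ - δ)
    (j : Fin c) (hj : j ≠ y i) :
    (∑ l : Fin k, (if y l = j then (2:ℝ) ^ (l:ℕ) else 0) * sigmoid (cs * (x - b l.castSucc)))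
      < ∑ l : Fin k, (if y l = y i then (2:ℝ) ^ (l:ℕ) else 0)
          * sigmoid (cs * (x - b l.castSucc)) := by
  set ε := Real.exp (-(cs * δ)) with hεdef
  have hεpos : 0 < ε := Real.exp_pos _
  -- sigmoid bounds on the strip
  have hσhi : ∀ l : Fin k, l ≤ i → 1 - ε < sigmoid (cs * (x - b l.castSucc)) := by
    intro l hl
    have hble : b l.castSucc ≤ b i.castSucc := hb.monotone (by simpa using hl)
    have hs : cs * δ < cs * (x - b l.castSucc) := by nlinarith
    have h1 := one_sub_exp_lt_sigmoid (cs * (x - b l.castSucc))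
    have h2 : Real.exp (-(cs * (x - b l.castSucc))) < ε := by
      rw [hεdef]
      exact Real.exp_lt_exp.2 (by linarith)
    linarith
  have hσlo : ∀ l : Fin k, i < l → sigmoid (cs * (x - b l.castSucc)) < ε := by
    intro l hl
    have hble : b i.succ ≤ b l.castSucc := by
      apply hb.monotone
      rw [Fin.le_def]
      simpa using hl
    have hs : cs * (x - b l.castSucc) < -(cs * δ) := by nlinarith
    have h1 := sigmoid_lt_exp (cs * (x - b l.castSucc))
    have h2 : Real.exp (cs * (x - b l.castSucc)) < ε := by
      rw [hεdef]
      exact Real.exp_lt_exp.2 hs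
    linarith
  -- lower bound for the RHS
  have hRHS : (2:ℝ) ^ (i:ℕ) * (1 - ε)
      ≤ ∑ l : Fin k, (if y l = y i then (2:ℝ) ^ (l:ℕ) else 0)
          * sigmoid (cs * (x - b l.castSucc)) := by
    have h1 : (if y i = y i then (2:ℝ) ^ (i:ℕ) else 0) * sigmoid (cs * (x - b i.castSucc))
        ≤ ∑ l : Fin k, (if y l = y i then (2:ℝ) ^ (l:ℕ) else 0)
            * sigmoid (cs * (x - b l.castSucc)) := by
      apply Finset.single_le_sum (f := fun l : Fin k =>
        (if y l = y i then (2:ℝ) ^ (l:ℕ) else 0) * sigmoid (cs * (x - b l.castSucc)))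
        _ (Finset.mem_univ i)
      intro l _
      split_ifs with h
      · exact mul_nonneg (by positivity) (sigmoid_pos _).le
      · simp
    simp only [if_pos rfl, if_true] at h1
    have h2 := hσhi i le_rfl
    nlinarith [pow_pos (by norm_num : (0:ℝ) < 2) (i:ℕ)]
  -- upper bound for the LHS
  have hLHS : (∑ l : Fin k, (if y l = j then (2:ℝ) ^ (l:ℕ) else 0)
        * sigmoid (cs * (x - b l.castSucc)))
      ≤ ∑ l : Fin k, ((if (l:ℕ) < (i:ℕ) then (2:ℝ) ^ (l:ℕ) else 0) + (2:ℝ) ^ (l:ℕ) * ε) := by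
    apply Finset.sum_le_sum
    intro l _
    have hσpos := sigmoid_pos (cs * (x - b l.castSucc))
    have hσlt1 := sigmoid_lt_one (cs * (x - b l.castSucc))
    have hpow : (0:ℝ) < 2 ^ (l:ℕ) := by positivity
    by_cases hyl : y l = j
    · have hlne : l ≠ i := by rintro rfl; exact hj hyl.symm
      rw [if_pos hyl]
      rcases lt_trichotomy (l:ℕ) (i:ℕ) with hlt | heq | hgt
      · rw [if_pos hlt]
        nlinarith
      · exact absurd (Fin.ext heq) hlne
      · rw [if_neg (by omega)]
        have := hσlo l (by rwa [Fin.lt_def])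
        nlinarith
    · rw [if_neg hyl]
      split_ifs with h
      · nlinarith
      · nlinarith
  -- compute the bounding sum
  have hsum1 : ∑ l : Fin k, (if (l:ℕ) < (i:ℕ) then (2:ℝ) ^ (l:ℕ) else 0)
      = 2 ^ (i:ℕ) - 1 := by
    rw [Fin.sum_univ_eq_sum_range (fun n => if n < (i:ℕ) then (2:ℝ) ^ n else 0) k]
    rw [← Finset.sum_subset (Finset.range_subset_range.2 i.isLt.le)
      (by intro n hn hni; simp only [Finset.mem_range] at hn hni; rw [if_neg (by omega)])]
    rw [Finset.sum_congr rfl (fun n hn => by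
      simp only [Finset.mem_range] at hn; rw [if_pos hn])]
    rw [geom_sum_eq (by norm_num) (i:ℕ)]
    norm_num
  have hsum2 : ∑ l : Fin k, (2:ℝ) ^ (l:ℕ) = 2 ^ k - 1 := by
    rw [Fin.sum_univ_eq_sum_range (fun n => (2:ℝ) ^ n) k, geom_sum_eq (by norm_num) k]
    norm_num
  have hsplit : ∑ l : Fin k, ((if (l:ℕ) < (i:ℕ) then (2:ℝ) ^ (l:ℕ) else 0)
        + (2:ℝ) ^ (l:ℕ) * ε)
      = (2 ^ (i:ℕ) - 1) + (2 ^ k - 1) * ε := by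
    rw [Finset.sum_add_distrib, hsum1, ← Finset.sum_mul, hsum2]
  have hik : (2:ℝ) ^ (i:ℕ) ≤ 2 ^ k :=
    pow_le_pow_right₀ (by norm_num) i.isLt.le
  have h2k1 : (2:ℝ) ^ (k + 1) = 2 * 2 ^ k := by ring
  rw [h2k1] at hε
  calc (∑ l : Fin k, (if y l = j then (2:ℝ) ^ (l:ℕ) else 0)
        * sigmoid (cs * (x - b l.castSucc)))
      ≤ (2 ^ (i:ℕ) - 1) + (2 ^ k - 1) * ε := by rw [← hsplit]; exact hLHS
    _ < 2 ^ (i:ℕ) * (1 - ε) := by nlinarith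
    _ ≤ _ := hRHS

/-- **Corollary 1.** If the distribution `μ` on `ℝ^d × {1,…,c}` is `k`-separable with
`δ`-margin (witnessed by the unit vector `a`, boundaries `b_1 < ⋯ < b_{k+1}` and
labels `y_1,…,y_k`), then there exist a scaling factor `c_s > 0` and a weight matrix
`W ∈ ℝ^{k×c}` such that the 2-layer sigmoid network perfectly classifies `μ`:
almost surely, the true label is the unique argmax of the network output. -/
theorem two_layer_network_perfect_classification {d c k : ℕ}
    (μ : Measure (EuclideanSpace ℝ (Fin d) × Fin c)) [IsProbabilityMeasure μ]
    (δ : ℝ) (hδ : 0 < δ)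
    (a : EuclideanSpace ℝ (Fin d)) (ha : ‖a‖ = 1)
    (b : Fin (k + 1) → ℝ) (hb : StrictMono b)
    (y : Fin k → Fin c)
    (hcond : ∀ i : Fin k,
      μ {p | (b i.castSucc + δ < ⟪a, p.1⟫ ∧ ⟪a, p.1⟫ < b i.succ - δ) ∧ p.2 = y i}
        = μ {p | b i.castSucc + δ < ⟪a, p.1⟫ ∧ ⟪a, p.1⟫ < b i.succ - δ})
    (hcover :
      μ {p | ∃ i : Fin k, b i.castSucc + δ < ⟪a, p.1⟫ ∧ ⟪a, p.1⟫ < b i.succ - δ} = 1) :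
    ∃ (cs : ℝ) (W : Matrix (Fin k) (Fin c) ℝ), 0 < cs ∧
      μ {p | ¬ ∀ j : Fin c, j ≠ p.2 →
        (∑ l : Fin k, W l j * sigmoid (cs * (⟪a, p.1⟫ - b l.castSucc)))
          < ∑ l : Fin k, W l p.2 * sigmoid (cs * (⟪a, p.1⟫ - b l.castSucc))} = 0 := by
  classical
  set cs : ℝ := (2 * (k:ℝ) + 4) * Real.log 2 / δ with hcsdef
  have hlog2 : 0 < Real.log 2 := Real.log_pos (by norm_num)
  have hcs : 0 < cs := by
    apply div_pos _ hδ
    positivity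
  have hcsδ : cs * δ = (2 * (k:ℝ) + 4) * Real.log 2 := by
    rw [hcsdef, div_mul_cancel₀ _ hδ.ne']
  have hε : (2:ℝ) ^ (k + 1) * Real.exp (-(cs * δ)) < 1 := by
    rw [hcsδ]
    have h1 : (2 * (k:ℝ) + 4) = ((2 * k + 4 : ℕ) : ℝ) := by push_cast; ring
    rw [h1, Real.exp_neg]
    have h2 : Real.exp (((2 * k + 4 : ℕ) : ℝ) * Real.log 2) = 2 ^ (2 * k + 4) := by
      rw [Real.exp_nat_mul, Real.exp_log (by norm_num)]
    rw [h2, mul_inv_lt_iff₀ (by positivity), one_mul]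
    exact pow_lt_pow_right₀ (by norm_num) (by omega)
  refine ⟨cs, fun l j => if y l = j then (2:ℝ) ^ (l:ℕ) else 0, hcs, ?_⟩
  -- strips and label sets
  set S : Fin k → Set (EuclideanSpace ℝ (Fin d) × Fin c) :=
    fun i => {p | b i.castSucc + δ < ⟪a, p.1⟫ ∧ ⟪a, p.1⟫ < b i.succ - δ} with hSdef
  set L : Fin k → Set (EuclideanSpace ℝ (Fin d) × Fin c) :=
    fun i => {p | p.2 = y i} with hLdef
  have hcont : Continuous fun p : EuclideanSpace ℝ (Fin d) × Fin c => ⟪a, p.1⟫ :=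
    Continuous.inner continuous_const continuous_fst
  have hSmeas : ∀ i, MeasurableSet (S i) := by
    intro i
    have : S i = (fun p : EuclideanSpace ℝ (Fin d) × Fin c => ⟪a, p.1⟫) ⁻¹'
        (Set.Ioo (b i.castSucc + δ) (b i.succ - δ)) := rfl
    rw [this]
    exact hcont.measurable measurableSet_Ioo
  have hLmeas : ∀ i, MeasurableSet (L i) := by
    intro i
    have : L i = Prod.snd ⁻¹' {y i} := rfl
    rw [this]
    exact measurable_snd (measurableSet_singleton _)
  have hnull : ∀ i, μ (S i \ L i) = 0 := by
    intro i
    have hinter : μ (S i ∩ L i) = μ (S i) := hcond i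
    have hdiff : μ (S i \ L i) = μ (S i) - μ (S i ∩ L i) := by
      rw [← Set.diff_self_inter]
      exact measure_diff Set.inter_subset_left
        (((hSmeas i).inter (hLmeas i)).nullMeasurableSet) (measure_ne_top μ _)
    rw [hdiff, hinter, tsub_self]
  have hC : μ (⋃ i, S i)ᶜ = 0 := by
    have hCeq : (⋃ i, S i) =
        {p | ∃ i : Fin k, b i.castSucc + δ < ⟪a, p.1⟫ ∧ ⟪a, p.1⟫ < b i.succ - δ} := by
      ext p; simp [hSdef, Set.mem_iUnion]
    rw [measure_compl (MeasurableSet.iUnion hSmeas) (measure_ne_top μ _), hCeq, hcover,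
      measure_univ, tsub_self]
  apply measure_mono_null _ (measure_union_null hC (measure_iUnion_null hnull))
  intro p hp
  simp only [Set.mem_setOf_eq] at hp
  by_contra hpz
  simp only [Set.mem_union, Set.mem_compl_iff, Set.mem_iUnion, not_or, not_exists] at hpz
  obtain ⟨hpC, hpB⟩ := hpz
  push_neg at hpC
  obtain ⟨i, hpi⟩ := hpC
  have hpL : p ∈ L i := by
    by_contra h
    exact hpB i ⟨hpi, h⟩
  have hy : p.2 = y i := hpL
  apply hp
  intro j hj
  rw [hy] at hj ⊢
  exact key_lt hδ hcs hε b hb y ⟪a, p.1⟫ i hpi.1 hpi.2 j hj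
end

section
/- (Lemma 1) Let D be a probability distribution on ℝ^d × {1,…,c} that is (k_1,…,k_n)-separable with δ-margin, witnessed by unit projection vectors a_1, …, a_n ∈ ℝ^d and boundaries b_{s,1} < ⋯ < b_{s,k_s+1} for each s. Then there exist, for each s ∈ {1,…,n}, a scaling factor c^{(s)} > 0 and weights W^{(s)} ∈ ℝ^{k_s} defining the 2-layer scalar sigmoid network p^s(x) = Σ_{l=1}^{k_s} W^{(s)}_l · ρ(c^{(s)}(a_sᵀx - b_{s,l})), such that, writing p(x) = (p^1(x), …, p^n(x)) ∈ ℝ^n, the pushforward distribution D′ of (p(x), y) under (x,y) ∼ D is (∏_{s=1}^{n} k_s)-separable with (1/(4√n))-margin, witnessed by the projection vector a = (1/√n)(1, 1, …, 1) ∈ ℝ^n. -/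
open RealInnerProductSpace MeasureTheory

lemma one_sub_sigmoid (t : ℝ) : 1 - sigmoid t = sigmoid (-t) := by
  unfold sigmoid
  rw [neg_neg, Real.exp_neg]
  have h := Real.exp_pos t
  field_simp
  ring

lemma sigmoid_le {T t : ℝ} (h : t ≤ -T) : sigmoid t ≤ 1 / (1 + Real.exp T) := by
  unfold sigmoid
  have : Real.exp T ≤ Real.exp (-t) := Real.exp_le_exp.2 (by linarith)
  gcongr

lemma le_sigmoid {T t : ℝ} (h : T ≤ t) : 1 - 1 / (1 + Real.exp T) ≤ sigmoid t := by
  have := sigmoid_le (T := T) (t := -t) (by linarith)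
  rw [← one_sub_sigmoid] at this
  linarith

lemma sigmoid_continuous : Continuous sigmoid := by
  unfold sigmoid
  exact continuous_const.div (by continuity) (fun t => by positivity)

lemma coord_est {kk : ℕ} (b : Fin (kk+1) → ℝ) (hb : StrictMono b)
    (δ T : ℝ) (hδ : 0 < δ) (hT : 0 < T) (M : ℝ) (hM : 0 ≤ M)
    (i : Fin kk) (u : ℝ) (h1 : b i.castSucc + δ < u) (h2 : u < b i.succ - δ) :
    |(∑ l : Fin kk, M * sigmoid (T/δ * (u - b l.castSucc))) - (((i:ℕ):ℝ)+1) * M|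
      ≤ kk * M * (1/(1+Real.exp T)) := by
  set η := 1/(1+Real.exp T) with hη
  have hterm : ∀ l : Fin kk,
      |sigmoid (T/δ * (u - b l.castSucc)) - (if (l:ℕ) ≤ (i:ℕ) then (1:ℝ) else 0)| ≤ η := by
    intro l
    by_cases hl : (l:ℕ) ≤ (i:ℕ)
    · rw [if_pos hl]
      have hble : b l.castSucc ≤ b i.castSucc := hb.monotone (by simp [Fin.le_def, hl])
      have harg : T ≤ T/δ * (u - b l.castSucc) := by
        have h3 : δ < u - b l.castSucc := by linarith
        have := mul_lt_mul_of_pos_left h3 (div_pos hT hδ)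
        rw [div_mul_cancel₀ T (ne_of_gt hδ)] at this
        linarith
      have hs1 := le_sigmoid harg
      have hs2 := sigmoid_lt_one (T/δ * (u - b l.castSucc))
      have hη0 : (0:ℝ) ≤ η := by positivity
      rw [abs_le]
      constructor
      · linarith
      · linarith
    · push_neg at hl
      rw [if_neg (not_le.2 hl), sub_zero]
      have hble : b i.succ ≤ b l.castSucc := hb.monotone (by simp [Fin.le_def, hl])
      have harg : T/δ * (u - b l.castSucc) ≤ -T := by
        have h3 : u - b l.castSucc < -δ := by linarith
        have := mul_lt_mul_of_pos_left h3 (div_pos hT hδ)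
        rw [mul_neg, div_mul_cancel₀ T (ne_of_gt hδ)] at this
        linarith
      have hs1 := sigmoid_le harg
      have hs2 := sigmoid_pos (T/δ * (u - b l.castSucc))
      have hη0 : (0:ℝ) ≤ η := by positivity
      rw [abs_le]
      constructor
      · linarith
      · linarith
  have hcount : (∑ l : Fin kk, M * (if (l:ℕ) ≤ (i:ℕ) then (1:ℝ) else 0)) = (((i:ℕ):ℝ)+1) * M := by
    rw [← Finset.mul_sum, Finset.sum_boole]
    have : (Finset.univ.filter fun l : Fin kk => (l:ℕ) ≤ (i:ℕ)) = Finset.Iic i := by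
      ext l
      rw [Finset.mem_filter, Finset.mem_Iic, Fin.le_def]
      simp
    rw [this, Fin.card_Iic]
    push_cast
    ring
  calc |(∑ l : Fin kk, M * sigmoid (T/δ * (u - b l.castSucc))) - (((i:ℕ):ℝ)+1) * M|
      = |∑ l : Fin kk, (M * sigmoid (T/δ * (u - b l.castSucc))
          - M * (if (l:ℕ) ≤ (i:ℕ) then (1:ℝ) else 0))| := by
        rw [Finset.sum_sub_distrib, hcount]
    _ ≤ ∑ l : Fin kk, |M * sigmoid (T/δ * (u - b l.castSucc))
          - M * (if (l:ℕ) ≤ (i:ℕ) then (1:ℝ) else 0)| := Finset.abs_sum_le_sum_abs _ _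
    _ ≤ ∑ _l : Fin kk, M * η := by
        apply Finset.sum_le_sum
        intro l _
        rw [← mul_sub, abs_mul, abs_of_nonneg hM]
        exact mul_le_mul_of_nonneg_left (hterm l) hM
    _ = kk * M * η := by simp [Finset.sum_const, mul_assoc]

/-- **Lemma 1.** If the distribution `μ` on `ℝ^d × {1,…,c}` is `(k_1,…,k_n)`-separable
with `δ`-margin (witnessed by unit vectors `a_1,…,a_n`, boundaries
`b_{s,1} < ⋯ < b_{s,k_s+1}` and labels `y_𝐢`), then one can choose, for each `s`, a
scaling factor `c^{(s)} > 0` and weights `W^{(s)} ∈ ℝ^{k_s}` such that, with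
`p^s(x) = Σ_l W^{(s)}_l ρ(c^{(s)}(a_sᵀx - b_{s,l}))` and `p(x) = (p^1(x),…,p^n(x))`,
the pushforward of `μ` under `(x,y) ↦ (p(x),y)` is `(∏_s k_s)`-separable with
`1/(4√n)`-margin, witnessed by the projection vector `a' = (1/√n)(1,…,1) ∈ ℝ^n`
(together with some boundaries `β_1 < ⋯ < β_{K+1}` and labels `y'_i`). -/
theorem map_to_one_dim_separable {d c n : ℕ} (hn : 1 ≤ n)
    (k : Fin n → ℕ) (hk : ∀ s, 0 < k s)
    (μ : Measure (EuclideanSpace ℝ (Fin d) × Fin c)) [IsProbabilityMeasure μ]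
    (δ : ℝ) (hδ : 0 < δ)
    (a : Fin n → EuclideanSpace ℝ (Fin d)) (ha : ∀ s, ‖a s‖ = 1)
    (b : ∀ s : Fin n, Fin (k s + 1) → ℝ) (hb : ∀ s, StrictMono (b s))
    (y : (∀ s : Fin n, Fin (k s)) → Fin c)
    (hcond : ∀ I : ∀ s : Fin n, Fin (k s),
      μ {p | (∀ s, b s (I s).castSucc + δ < ⟪a s, p.1⟫ ∧ ⟪a s, p.1⟫ < b s (I s).succ - δ)
              ∧ p.2 = y I}
        = μ {p | ∀ s, b s (I s).castSucc + δ < ⟪a s, p.1⟫ ∧ ⟪a s, p.1⟫ < b s (I s).succ - δ})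
    (hcover : μ {p | ∃ I : ∀ s : Fin n, Fin (k s),
      ∀ s, b s (I s).castSucc + δ < ⟪a s, p.1⟫ ∧ ⟪a s, p.1⟫ < b s (I s).succ - δ} = 1) :
    ∃ (cS : Fin n → ℝ) (W : ∀ s : Fin n, Fin (k s) → ℝ),
      (∀ s, 0 < cS s) ∧
      ∀ (p : EuclideanSpace ℝ (Fin d) → EuclideanSpace ℝ (Fin n)),
        (∀ x s, p x s = ∑ l : Fin (k s),
          W s l * sigmoid (cS s * (⟪a s, x⟫ - b s l.castSucc))) →
      ∀ (a' : EuclideanSpace ℝ (Fin n)), (∀ s, a' s = 1 / Real.sqrt n) →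
      ∃ (β : Fin ((∏ s : Fin n, k s) + 1) → ℝ)
        (y' : Fin (∏ s : Fin n, k s) → Fin c),
        StrictMono β ∧
        (∀ i : Fin (∏ s : Fin n, k s),
          Measure.map (fun q : EuclideanSpace ℝ (Fin d) × Fin c => (p q.1, q.2)) μ
            {q : EuclideanSpace ℝ (Fin n) × Fin c |
              (β i.castSucc + 1 / (4 * Real.sqrt n) < ⟪a', q.1⟫ ∧
                ⟪a', q.1⟫ < β i.succ - 1 / (4 * Real.sqrt n)) ∧ q.2 = y' i}
          = Measure.map (fun q : EuclideanSpace ℝ (Fin d) × Fin c => (p q.1, q.2)) μ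
            {q : EuclideanSpace ℝ (Fin n) × Fin c |
              β i.castSucc + 1 / (4 * Real.sqrt n) < ⟪a', q.1⟫ ∧
                ⟪a', q.1⟫ < β i.succ - 1 / (4 * Real.sqrt n)}) ∧
        Measure.map (fun q : EuclideanSpace ℝ (Fin d) × Fin c => (p q.1, q.2)) μ
          {q : EuclideanSpace ℝ (Fin n) × Fin c |
            ∃ i : Fin (∏ s : Fin n, k s),
              β i.castSucc + 1 / (4 * Real.sqrt n) < ⟪a', q.1⟫ ∧
                ⟪a', q.1⟫ < β i.succ - 1 / (4 * Real.sqrt n)} = 1 := by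
  classical
  haveI : Nonempty (Fin n) := Fin.pos_iff_nonempty.1 hn
  set M : Fin n → ℕ := fun s => ∏ j, k (Fin.castLE s.is_lt.le j) with hM_def
  have hMpos : ∀ s, 0 < M s := fun s => Finset.prod_pos fun j _ => hk _
  set N : ℕ := ∑ s, k s * M s with hN_def
  have hNpos : 0 < N :=
    Finset.sum_pos (fun s _ => mul_pos (hk s) (hMpos s)) Finset.univ_nonempty
  have hN1 : (1:ℝ) ≤ (N:ℝ) := by exact_mod_cast hNpos
  set T : ℝ := Real.log (4 * N) with hT_def
  have h4N : (0:ℝ) < 4 * N := by positivity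
  have hT : 0 < T := Real.log_pos (by linarith)
  have hexpT : Real.exp T = 4 * N := Real.exp_log h4N
  set η : ℝ := 1 / (1 + Real.exp T) with hη_def
  have hη0 : 0 ≤ η := by positivity
  have hηN : (N:ℝ) * η < 1/4 := by
    rw [hη_def, hexpT, mul_one_div, div_lt_iff₀ (by linarith)]
    linarith
  refine ⟨fun _ => T / δ, fun s _ => (M s : ℝ), fun s => div_pos hT hδ, ?_⟩
  intro p hp a' ha'
  have hn0 : (0:ℝ) < (n:ℝ) := by exact_mod_cast hn
  have hsn : 0 < Real.sqrt n := Real.sqrt_pos.2 hn0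
  set C : ℝ := ∑ s, (M s : ℝ) with hC_def
  set e : (∀ s : Fin n, Fin (k s)) ≃ Fin (∏ s : Fin n, k s) := finPiFinEquiv with he_def
  set β : Fin ((∏ s : Fin n, k s) + 1) → ℝ :=
    fun j => (C + (j:ℕ) - 1/2) / Real.sqrt n with hβ_def
  -- main estimate: on the cell indexed by I, the sum of coordinates of p x is within 1/4
  -- of (rank I) + C
  have hval : ∀ (I : ∀ s : Fin n, Fin (k s)) (x : EuclideanSpace ℝ (Fin d)),
      (∀ s, b s (I s).castSucc + δ < ⟪a s, x⟫ ∧ ⟪a s, x⟫ < b s (I s).succ - δ) →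
      (((e I : ℕ):ℝ) + C - 1/4 < ∑ s, p x s ∧ ∑ s, p x s < ((e I : ℕ):ℝ) + C + 1/4) := by
    intro I x hx
    have hps : ∀ s, |p x s - (((I s : ℕ):ℝ) + 1) * (M s : ℝ)| ≤ (k s : ℝ) * (M s : ℝ) * η := by
      intro s
      rw [hp]
      exact coord_est (b s) (hb s) δ T hδ hT (M s : ℝ) (by positivity) (I s) _ (hx s).1 (hx s).2
    have h1 : |(∑ s, p x s) - ∑ s, (((I s : ℕ):ℝ) + 1) * (M s : ℝ)| ≤ (N:ℝ) * η := by
      calc |(∑ s, p x s) - ∑ s, (((I s : ℕ):ℝ) + 1) * (M s : ℝ)|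
          = |∑ s, (p x s - (((I s : ℕ):ℝ) + 1) * (M s : ℝ))| := by
            rw [Finset.sum_sub_distrib]
        _ ≤ ∑ s, |p x s - (((I s : ℕ):ℝ) + 1) * (M s : ℝ)| := Finset.abs_sum_le_sum_abs _ _
        _ ≤ ∑ s, (k s : ℝ) * (M s : ℝ) * η := Finset.sum_le_sum fun s _ => hps s
        _ = (N:ℝ) * η := by
            rw [← Finset.sum_mul]
            congr 1
            rw [hN_def]
            push_cast
            rfl
    have hrankNat : (e I : ℕ) = ∑ s, (I s : ℕ) * M s := by
      rw [he_def]
      rw [finPiFinEquiv_apply]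
    have hrank : (∑ s, (((I s : ℕ):ℝ) + 1) * (M s : ℝ)) = ((e I : ℕ):ℝ) + C := by
      rw [hrankNat, hC_def]
      push_cast
      rw [← Finset.sum_add_distrib]
      exact Finset.sum_congr rfl fun s _ => by ring
    rw [hrank] at h1
    have h2 := abs_le.1 h1
    constructor <;> [linarith [h2.1]; linarith [h2.2]]
  -- inner products with a'
  have hinner : ∀ v : EuclideanSpace ℝ (Fin n), ⟪a', v⟫ = (∑ s, v s) / Real.sqrt n := by
    intro v
    simp only [PiLp.inner_apply, RCLike.inner_apply, conj_trivial]
    rw [Finset.sum_div]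
    exact Finset.sum_congr rfl fun s _ => by rw [ha' s, one_div, div_eq_mul_inv]
  have hq4 : 1 / (4 * Real.sqrt n) = (1/4) / Real.sqrt n := by
    rw [one_div, mul_inv, div_eq_mul_inv]
    ring
  -- membership of the image point in the interval indexed by (e I)
  have hIoo : ∀ (I : ∀ s : Fin n, Fin (k s)) (x : EuclideanSpace ℝ (Fin d)),
      (∀ s, b s (I s).castSucc + δ < ⟪a s, x⟫ ∧ ⟪a s, x⟫ < b s (I s).succ - δ) →
      (β (e I).castSucc + 1 / (4 * Real.sqrt n) < ⟪a', p x⟫ ∧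
        ⟪a', p x⟫ < β (e I).succ - 1 / (4 * Real.sqrt n)) := by
    intro I x hx
    obtain ⟨h1, h2⟩ := hval I x hx
    rw [hinner, hq4, hβ_def]
    simp only [Fin.coe_castSucc, Fin.val_succ]
    constructor
    · rw [← add_div, div_lt_div_iff₀ hsn hsn]
      push_cast
      nlinarith [hsn]
    · rw [← sub_div, div_lt_div_iff₀ hsn hsn]
      push_cast
      nlinarith [hsn]
  -- uniqueness of the interval containing the image point
  have huniq : ∀ (i : Fin (∏ s : Fin n, k s)) (I : ∀ s : Fin n, Fin (k s))
      (x : EuclideanSpace ℝ (Fin d)),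
      (∀ s, b s (I s).castSucc + δ < ⟪a s, x⟫ ∧ ⟪a s, x⟫ < b s (I s).succ - δ) →
      (β i.castSucc + 1 / (4 * Real.sqrt n) < ⟪a', p x⟫ ∧
        ⟪a', p x⟫ < β i.succ - 1 / (4 * Real.sqrt n)) → i = e I := by
    intro i I x hx hi
    obtain ⟨hI1, hI2⟩ := hIoo I x hx
    obtain ⟨hi1, hi2⟩ := hi
    rw [hβ_def] at hI1 hI2 hi1 hi2
    simp only [Fin.coe_castSucc, Fin.val_succ] at hI1 hI2 hi1 hi2
    rw [hq4] at hI1 hI2 hi1 hi2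
    have hlt1 : ((i:ℕ):ℝ) < ((e I : ℕ):ℝ) + 1 := by
      have := hi1.trans hI2
      rw [← add_div, ← sub_div, div_lt_div_iff₀ hsn hsn] at this
      push_cast at this
      nlinarith [hsn]
    have hlt2 : ((e I : ℕ):ℝ) < ((i:ℕ):ℝ) + 1 := by
      have := hI1.trans hi2
      rw [← add_div, ← sub_div, div_lt_div_iff₀ hsn hsn] at this
      push_cast at this
      nlinarith [hsn]
    have h1 : (i:ℕ) < (e I : ℕ) + 1 := by exact_mod_cast hlt1
    have h2 : (e I : ℕ) < (i:ℕ) + 1 := by exact_mod_cast hlt2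
    exact Fin.ext (by omega)
  -- measurability facts
  have hpc : Continuous p := by
    have hpe : p = fun x => WithLp.toLp 2 (fun s => ∑ l : Fin (k s),
        (M s : ℝ) * sigmoid (T / δ * (⟪a s, x⟫ - b s l.castSucc)) : Fin n → ℝ) :=
      funext fun x => PiLp.ext fun s => hp x s
    rw [hpe]
    apply (PiLp.continuous_toLp 2 _).comp
    apply continuous_pi
    intro s
    apply continuous_finset_sum
    intro l _
    exact continuous_const.mul (sigmoid_continuous.comp (continuous_const.mul
      ((Continuous.inner continuous_const continuous_id).sub continuous_const)))
  set F : EuclideanSpace ℝ (Fin d) × Fin c → EuclideanSpace ℝ (Fin n) × Fin c :=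
    fun q => (p q.1, q.2) with hF_def
  have hF : Measurable F :=
    (hpc.measurable.comp measurable_fst).prodMk measurable_snd
  have hg' : Measurable fun q : EuclideanSpace ℝ (Fin n) × Fin c => ⟪a', q.1⟫ :=
    (Continuous.inner continuous_const continuous_id).measurable.comp measurable_fst
  have hgs : ∀ s : Fin n, Measurable fun q : EuclideanSpace ℝ (Fin d) × Fin c => ⟪a s, q.1⟫ :=
    fun s => (Continuous.inner continuous_const continuous_id).measurable.comp measurable_fst
  have hSmeas : ∀ i : Fin (∏ s : Fin n, k s),
      MeasurableSet {q : EuclideanSpace ℝ (Fin n) × Fin c |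
        β i.castSucc + 1 / (4 * Real.sqrt n) < ⟪a', q.1⟫ ∧
          ⟪a', q.1⟫ < β i.succ - 1 / (4 * Real.sqrt n)} := by
    intro i
    exact hg' measurableSet_Ioo
  have hS'meas : ∀ i : Fin (∏ s : Fin n, k s),
      MeasurableSet {q : EuclideanSpace ℝ (Fin n) × Fin c |
        (β i.castSucc + 1 / (4 * Real.sqrt n) < ⟪a', q.1⟫ ∧
          ⟪a', q.1⟫ < β i.succ - 1 / (4 * Real.sqrt n)) ∧ q.2 = y (e.symm i)} := by
    intro i
    exact (hSmeas i).inter (measurable_snd (measurableSet_singleton _))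
  have hUmeas : MeasurableSet {q : EuclideanSpace ℝ (Fin n) × Fin c |
      ∃ i : Fin (∏ s : Fin n, k s),
        β i.castSucc + 1 / (4 * Real.sqrt n) < ⟪a', q.1⟫ ∧
          ⟪a', q.1⟫ < β i.succ - 1 / (4 * Real.sqrt n)} := by
    have : {q : EuclideanSpace ℝ (Fin n) × Fin c |
        ∃ i : Fin (∏ s : Fin n, k s),
          β i.castSucc + 1 / (4 * Real.sqrt n) < ⟪a', q.1⟫ ∧
            ⟪a', q.1⟫ < β i.succ - 1 / (4 * Real.sqrt n)} =
        ⋃ i : Fin (∏ s : Fin n, k s), {q : EuclideanSpace ℝ (Fin n) × Fin c |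
          β i.castSucc + 1 / (4 * Real.sqrt n) < ⟪a', q.1⟫ ∧
            ⟪a', q.1⟫ < β i.succ - 1 / (4 * Real.sqrt n)} := by
      ext q
      simp only [Set.mem_iUnion, Set.mem_setOf_eq]
    rw [this]
    exact MeasurableSet.iUnion fun i => hSmeas i
  -- the full-measure set G
  set G : Set (EuclideanSpace ℝ (Fin d) × Fin c) := {q | ∃ I : ∀ s : Fin n, Fin (k s),
      ∀ s, b s (I s).castSucc + δ < ⟪a s, q.1⟫ ∧ ⟪a s, q.1⟫ < b s (I s).succ - δ}
    with hG_def
  have hGmeas : MeasurableSet G := by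
    have : G = ⋃ I : ∀ s : Fin n, Fin (k s), ⋂ s : Fin n,
        {q : EuclideanSpace ℝ (Fin d) × Fin c |
          b s (I s).castSucc + δ < ⟪a s, q.1⟫ ∧ ⟪a s, q.1⟫ < b s (I s).succ - δ} := by
      ext q
      simp only [hG_def, Set.mem_iUnion, Set.mem_iInter, Set.mem_setOf_eq]
    rw [this]
    exact MeasurableSet.iUnion fun I => MeasurableSet.iInter fun s => hgs s measurableSet_Ioo
  have hG1 : μ G = 1 := hcover
  have hGc : μ Gᶜ = 0 := by
    rw [prob_compl_eq_zero_iff hGmeas]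
    exact hG1
  have hcapG : ∀ A : Set (EuclideanSpace ℝ (Fin d) × Fin c), μ A = μ (A ∩ G) := by
    intro A
    refine le_antisymm ?_ (measure_mono Set.inter_subset_left)
    calc μ A = μ ((A ∩ G) ∪ (A ∩ Gᶜ)) := by rw [Set.inter_union_compl]
      _ ≤ μ (A ∩ G) + μ (A ∩ Gᶜ) := measure_union_le _ _
      _ ≤ μ (A ∩ G) + μ Gᶜ := add_le_add le_rfl (measure_mono Set.inter_subset_right)
      _ = μ (A ∩ G) := by rw [hGc, add_zero]
  refine ⟨β, fun i => y (e.symm i), ?_, ?_, ?_⟩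
  · -- strict monotonicity of β
    intro j1 j2 hj
    rw [hβ_def]
    apply (div_lt_div_iff_of_pos_right hsn).2
    have : ((j1:ℕ):ℝ) < ((j2:ℕ):ℝ) := by exact_mod_cast hj
    linarith
  · -- the label condition
    intro i
    rw [Measure.map_apply hF (hS'meas i), Measure.map_apply hF (hSmeas i)]
    have hpre : F ⁻¹' {q : EuclideanSpace ℝ (Fin n) × Fin c |
        β i.castSucc + 1 / (4 * Real.sqrt n) < ⟪a', q.1⟫ ∧
          ⟪a', q.1⟫ < β i.succ - 1 / (4 * Real.sqrt n)} ∩ G =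
        {q : EuclideanSpace ℝ (Fin d) × Fin c | ∀ s,
          b s ((e.symm i) s).castSucc + δ < ⟪a s, q.1⟫ ∧
            ⟪a s, q.1⟫ < b s ((e.symm i) s).succ - δ} := by
      ext q
      constructor
      · rintro ⟨hqS, I', hI'⟩
        have := huniq i I' q.1 hI' hqS
        have hI'eq : I' = e.symm i := by rw [this, Equiv.symm_apply_apply]
        rw [← hI'eq]
        exact hI'
      · intro hq
        have hmem := hIoo (e.symm i) q.1 hq
        rw [Equiv.apply_symm_apply] at hmem
        exact ⟨hmem, e.symm i, hq⟩
    have hpre' : F ⁻¹' {q : EuclideanSpace ℝ (Fin n) × Fin c |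
        (β i.castSucc + 1 / (4 * Real.sqrt n) < ⟪a', q.1⟫ ∧
          ⟪a', q.1⟫ < β i.succ - 1 / (4 * Real.sqrt n)) ∧ q.2 = y (e.symm i)} ∩ G =
        {q : EuclideanSpace ℝ (Fin d) × Fin c | (∀ s,
          b s ((e.symm i) s).castSucc + δ < ⟪a s, q.1⟫ ∧
            ⟪a s, q.1⟫ < b s ((e.symm i) s).succ - δ) ∧ q.2 = y (e.symm i)} := by
      ext q
      constructor
      · rintro ⟨⟨hqS, hqy⟩, I', hI'⟩
        have := huniq i I' q.1 hI' hqS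
        have hI'eq : I' = e.symm i := by rw [this, Equiv.symm_apply_apply]
        rw [← hI'eq]
        exact ⟨hI', by rw [hI'eq]; exact hqy⟩
      · rintro ⟨hq, hqy⟩
        have hmem := hIoo (e.symm i) q.1 hq
        rw [Equiv.apply_symm_apply] at hmem
        exact ⟨⟨hmem, hqy⟩, e.symm i, hq⟩
    rw [hcapG (F ⁻¹' _), hpre', hcapG (F ⁻¹' _), hpre]
    exact hcond (e.symm i)
  · -- full measure of the union
    rw [Measure.map_apply hF hUmeas]
    refine le_antisymm prob_le_one ?_
    calc (1:ENNReal) = μ G := hG1.symm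
      _ ≤ μ (F ⁻¹' {q : EuclideanSpace ℝ (Fin n) × Fin c |
          ∃ i : Fin (∏ s : Fin n, k s),
            β i.castSucc + 1 / (4 * Real.sqrt n) < ⟪a', q.1⟫ ∧
              ⟪a', q.1⟫ < β i.succ - 1 / (4 * Real.sqrt n)}) := by
        apply measure_mono
        rintro q ⟨I, hI⟩
        exact ⟨e I, hIoo I q.1 hI⟩
end
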